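/- Let T be a bounded operator with closed range on a complex Hilbert space such that T = P Q for orthogonal projections P, Q (so T = P_T P_{T*}). Then ‖P_{T*}(I − T)‖ < 1; in particular, the Q_T-proper splitting of T converges. -/

import Mathlib

set_option maxHeartbeats 1000000

open ContinuousLinearMap
open scoped InnerProductSpace

/-- `Td` is the Moore–Penrose inverse of `T`. -/
def IsMoorePenroseInverse {H : Type*} [NormedAddCommGroup H] [InnerProductSpace ℂ H]
    [CompleteSpace H] (T Td : H →L[ℂ] H) : Prop :=
  T ∘L Td ∘L T = T ∧ Td ∘L T ∘L Td = Td ∧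
    IsSelfAdjoint (T ∘L Td) ∧ IsSelfAdjoint (Td ∘L T)

lemma bounded_below_aux {H : Type*} [NormedAddCommGroup H] [InnerProductSpace ℂ H]
    [CompleteSpace H] (T : H →L[ℂ] H) (hTcr : IsClosed (LinearMap.range (T : H →ₗ[ℂ] H) : Set H)) :
    ∃ c : ℝ, 0 < c ∧ c ≤ 1 ∧ ∀ x ∈ (LinearMap.ker (T : H →ₗ[ℂ] H))ᗮ, c * ‖x‖ ≤ ‖T x‖ := by
  haveI : CompleteSpace (LinearMap.range (T : H →ₗ[ℂ] H)) := hTcr.completeSpace_coe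
  haveI : CompleteSpace ((LinearMap.ker (T : H →ₗ[ℂ] H))ᗮ : Submodule ℂ H) :=
    (Submodule.isClosed_orthogonal _).completeSpace_coe
  haveI : CompleteSpace (LinearMap.ker (T : H →ₗ[ℂ] H)) := (ContinuousLinearMap.isClosed_ker T).completeSpace_coe
  set K := (LinearMap.ker (T : H →ₗ[ℂ] H))ᗮ with hKdef
  set f : K →L[ℂ] (LinearMap.range (T : H →ₗ[ℂ] H)) :=
    (T.comp K.subtypeL).codRestrict (LinearMap.range (T : H →ₗ[ℂ] H))
      (fun x => LinearMap.mem_range_self _ _) with hfdef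
  have hfx : ∀ x : K, (f x : H) = T x := fun x => rfl
  have hker : LinearMap.ker (f : K →ₗ[ℂ] LinearMap.range (T : H →ₗ[ℂ] H)) = ⊥ := by
    rw [Submodule.eq_bot_iff]
    intro x hx
    have h1 : T (x : H) = 0 := by
      have := congrArg (Subtype.val) (LinearMap.mem_ker.mp hx)
      simpa [hfx] using this
    have h2 : (x : H) ∈ LinearMap.ker (T : H →ₗ[ℂ] H) := h1
    have h3 : ⟪(x : H), (x : H)⟫_ℂ = 0 :=
      (Submodule.mem_orthogonal (LinearMap.ker (T : H →ₗ[ℂ] H)) (x : H)).mp x.2 (x : H) h2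
    ext1
    simpa using inner_self_eq_zero.mp h3
  have hrange : LinearMap.range (f : K →ₗ[ℂ] LinearMap.range (T : H →ₗ[ℂ] H)) = ⊤ := by
    rw [Submodule.eq_top_iff']
    intro y
    obtain ⟨z, hz⟩ := y.2
    refine ⟨⟨z - (Submodule.orthogonalProjectionOnto (LinearMap.ker (T : H →ₗ[ℂ] H)) z : H),
      Submodule.sub_starProjection_mem_orthogonal z⟩, ?_⟩
    ext
    have hpk : T ((LinearMap.ker (T : H →ₗ[ℂ] H)).starProjection z) = 0 :=
      (Submodule.orthogonalProjectionOnto (LinearMap.ker (T : H →ₗ[ℂ] H)) z).2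
    simp [hfx, map_sub, hpk, ← hz]
  set e := ContinuousLinearEquiv.ofBijective f hker hrange with hedef
  have h2 := fun x : K => e.antilipschitz.le_mul_norm (map_zero e) x
  obtain ⟨C, hC0, hC⟩ : ∃ C : ℝ, 0 ≤ C ∧ ∀ x : K, ‖(x : H)‖ ≤ C * ‖T (x : H)‖ :=
    ⟨_, NNReal.coe_nonneg _, h2⟩
  refine ⟨(max C 1)⁻¹, by positivity, ?_, ?_⟩
  · rw [inv_le_one_iff₀]; right; exact le_max_right _ _
  · intro x hx
    have h1 := hC ⟨x, hx⟩
    have hmax : ‖x‖ ≤ (max C 1) * ‖T x‖ := by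
      refine le_trans h1 ?_
      have h0 : (0:ℝ) ≤ ‖T x‖ := norm_nonneg _
      nlinarith [le_max_left C 1]
    have hpos : (0:ℝ) < max C 1 := by positivity
    calc (max C 1)⁻¹ * ‖x‖ ≤ (max C 1)⁻¹ * ((max C 1) * ‖T x‖) :=
          mul_le_mul_of_nonneg_left hmax (by positivity)
      _ = ‖T x‖ := by field_simp

/-- If `T` is a closed range product of two orthogonal projections then
`‖P_{T*}(I - T)‖ < 1`, and the `Q_T`-proper splitting of `T` converges. -/
theorem Q_proper_splitting_of_product_of_projections
    {H : Type*} [NormedAddCommGroup H] [InnerProductSpace ℂ H] [CompleteSpace H]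
    (T P1 P2 Q Qd P : H →L[ℂ] H)
    (hTcr : IsClosed (LinearMap.range (T : H →ₗ[ℂ] H) : Set H))
    (hP1 : IsSelfAdjoint P1) (hP12 : P1 ∘L P1 = P1)
    (hP2 : IsSelfAdjoint P2) (hP22 : P2 ∘L P2 = P2)
    (hT : T = P1 ∘L P2)
    -- Q is the oblique projection onto ran T along ker T
    (hQ2 : Q ∘L Q = Q)
    (hQran : LinearMap.range (Q : H →ₗ[ℂ] H) = LinearMap.range (T : H →ₗ[ℂ] H))
    (hQker : LinearMap.ker (Q : H →ₗ[ℂ] H) = LinearMap.ker (T : H →ₗ[ℂ] H))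
    (hQd : IsMoorePenroseInverse Q Qd)
    -- P is the orthogonal projection onto ran T*
    (hP : IsSelfAdjoint P) (hPP : P ∘L P = P)
    (hPran : LinearMap.range (P : H →ₗ[ℂ] H) = LinearMap.range ((adjoint T : H →L[ℂ] H) : H →ₗ[ℂ] H)) :
    ‖P ∘L (1 - T)‖ < 1 ∧ spectralRadius ℂ (Qd ∘L (Q - T)) < 1 := by
  obtain ⟨hQmp1, hQmp2, hQsa1, hQsa2⟩ := hQd
  have hTadj : adjoint T = P2 ∘L P1 := by
    rw [hT, ContinuousLinearMap.adjoint_comp, hP1.adjoint_eq, hP2.adjoint_eq]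
  have hPPp : ∀ x, P (P x) = P x := fun x => by
    simpa using DFunLike.congr_fun hPP x
  have hP12p : ∀ x, P1 (P1 x) = P1 x := fun x => by
    simpa using DFunLike.congr_fun hP12 x
  have hP22p : ∀ x, P2 (P2 x) = P2 x := fun x => by
    simpa using DFunLike.congr_fun hP22 x
  have hQ2p : ∀ x, Q (Q x) = Q x := fun x => by
    simpa using DFunLike.congr_fun hQ2 x
  -- ker P ⊆ ker T
  have hPT : ∀ x, P x = 0 → T x = 0 := by
    intro x hx
    have hmem : adjoint T (T x) ∈ LinearMap.range (P : H →ₗ[ℂ] H) := by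
      rw [hPran]; exact LinearMap.mem_range_self _ _
    obtain ⟨w, hw⟩ := hmem
    have key : ⟪T x, T x⟫_ℂ = 0 := by
      calc ⟪T x, T x⟫_ℂ = ⟪x, adjoint T (T x)⟫_ℂ :=
            (ContinuousLinearMap.adjoint_inner_right T x (T x)).symm
        _ = ⟪x, P w⟫_ℂ := by rw [← hw]; rfl
        _ = ⟪(adjoint P) x, w⟫_ℂ := (ContinuousLinearMap.adjoint_inner_left P w x).symm
        _ = ⟪P x, w⟫_ℂ := by rw [hP.adjoint_eq]
        _ = 0 := by rw [hx, inner_zero_left]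
    exact inner_self_eq_zero.mp key
  -- ker T ⊆ ker P
  have hTkerP : ∀ x, T x = 0 → P x = 0 := by
    intro x hx
    have hmem : P (P x) ∈ LinearMap.range ((adjoint T : H →L[ℂ] H) : H →ₗ[ℂ] H) := by
      rw [← hPran]; exact LinearMap.mem_range_self _ _
    obtain ⟨z, hz⟩ := hmem
    have key : ⟪P x, P x⟫_ℂ = 0 := by
      calc ⟪P x, P x⟫_ℂ = ⟪(adjoint P) x, P x⟫_ℂ := by rw [hP.adjoint_eq]
        _ = ⟪x, P (P x)⟫_ℂ := ContinuousLinearMap.adjoint_inner_left P (P x) x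
        _ = ⟪x, adjoint T z⟫_ℂ := by rw [← hz]; rfl
        _ = ⟪T x, z⟫_ℂ := ContinuousLinearMap.adjoint_inner_right T x z
        _ = 0 := by rw [hx, inner_zero_left]
    exact inner_self_eq_zero.mp key
  -- T ∘ P = T pointwise
  have hTPp : ∀ x, T (P x) = T x := by
    intro x
    have h0 : P (x - P x) = 0 := by rw [map_sub, hPPp, sub_self]
    have h1 := hPT _ h0
    rw [map_sub, sub_eq_zero] at h1
    exact h1.symm
  -- P2 fixes ran P
  have hP2P : ∀ y, P2 (P y) = P y := by
    intro y
    have hmem : P y ∈ LinearMap.range ((adjoint T : H →L[ℂ] H) : H →ₗ[ℂ] H) := by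
      rw [← hPran]; exact ⟨y, rfl⟩
    obtain ⟨z, hz⟩ := hmem
    rw [← hz, hTadj]
    simpa using hP22p (P1 z)
  -- ‖P z‖ ≤ ‖z‖
  have hPnorm : ∀ z, ‖P z‖ ≤ ‖z‖ := by
    intro z
    have h1 : ‖P z‖ ^ 2 = RCLike.re ⟪P z, P z⟫_ℂ := (inner_self_eq_norm_sq (P z)).symm
    have h2 : ⟪P z, P z⟫_ℂ = ⟪z, P z⟫_ℂ := by
      calc ⟪P z, P z⟫_ℂ = ⟪(adjoint P) z, P z⟫_ℂ := by rw [hP.adjoint_eq]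
        _ = ⟪z, P (P z)⟫_ℂ := ContinuousLinearMap.adjoint_inner_left P (P z) z
        _ = ⟪z, P z⟫_ℂ := by rw [hPPp]
    have h3 : RCLike.re ⟪z, P z⟫_ℂ ≤ ‖z‖ * ‖P z‖ := re_inner_le_norm z (P z)
    have h4 : ‖P z‖ ^ 2 ≤ ‖z‖ * ‖P z‖ := by rw [h1, h2]; exact h3
    nlinarith [norm_nonneg z, norm_nonneg (P z)]
  obtain ⟨c, hc0, hc1, hcb⟩ := bounded_below_aux T hTcr
  -- ran P ⊆ (ker T)ᗮ
  have hPo : ∀ y, P y ∈ (LinearMap.ker (T : H →ₗ[ℂ] H))ᗮ := by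
    intro y
    have hmem : P y ∈ LinearMap.range ((adjoint T : H →L[ℂ] H) : H →ₗ[ℂ] H) := by
      rw [← hPran]; exact ⟨y, rfl⟩
    obtain ⟨z, hz⟩ := hmem
    rw [← hz, Submodule.mem_orthogonal]
    intro u hu
    have hu0 : T u = 0 := hu
    rw [ContinuousLinearMap.coe_coe, ContinuousLinearMap.adjoint_inner_right T u z, hu0, inner_zero_left]
  -- main estimate
  have hmain : ∀ y, ‖(P ∘L (1 - T)) y‖ ≤ Real.sqrt (1 - c ^ 2) * ‖y‖ := by
    intro y
    set x := P y with hxdef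
    have hPx : P x = x := hPPp y
    have happ : (P ∘L (1 - T)) y = x - P (T x) := by
      have hTy : T y = T x := (hTPp y).symm
      simp [ContinuousLinearMap.comp_apply, ContinuousLinearMap.sub_apply,
        ContinuousLinearMap.one_apply, map_sub, hTy]
      exact hxdef.symm
    have hTx : T x = P1 x := by
      have h1 : T x = P1 (P2 x) := by rw [hT]; rfl
      rw [h1, show P2 x = x from hP2P y]
    have hinner : RCLike.re ⟪x, T x⟫_ℂ = ‖T x‖ ^ 2 := by
      have h1 : ⟪x, T x⟫_ℂ = ⟪P1 x, P1 x⟫_ℂ := by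
        rw [hTx]
        calc ⟪x, P1 x⟫_ℂ = ⟪x, P1 (P1 x)⟫_ℂ := by rw [hP12p]
          _ = ⟪x, (adjoint P1) (P1 x)⟫_ℂ := by rw [hP1.adjoint_eq]
          _ = ⟪P1 x, P1 x⟫_ℂ := ContinuousLinearMap.adjoint_inner_right P1 x (P1 x)
      rw [h1, inner_self_eq_norm_sq, hTx]
    have hPTx : ‖P (T x)‖ ≤ ‖T x‖ := hPnorm _
    have hcx : c * ‖x‖ ≤ ‖T x‖ := hcb x (hPo y)
    have h2 : ⟪x, P (T x)⟫_ℂ = ⟪x, T x⟫_ℂ := by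
      calc ⟪x, P (T x)⟫_ℂ = ⟪x, (adjoint P) (T x)⟫_ℂ := by rw [hP.adjoint_eq]
        _ = ⟪P x, T x⟫_ℂ := ContinuousLinearMap.adjoint_inner_right P x (T x)
        _ = ⟪x, T x⟫_ℂ := by rw [hPx]
    have hexp : ‖x - P (T x)‖ ^ 2
        = ‖x‖ ^ 2 - 2 * RCLike.re ⟪x, P (T x)⟫_ℂ + ‖P (T x)‖ ^ 2 :=
      @norm_sub_sq ℂ _ _ _ _ x (P (T x))
    have hsq : ‖x - P (T x)‖ ^ 2 ≤ (1 - c ^ 2) * ‖x‖ ^ 2 := by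
      rw [hexp, h2, hinner]
      nlinarith [norm_nonneg (T x), norm_nonneg x, norm_nonneg (P (T x)),
        mul_le_mul hcx hcx (by positivity) (norm_nonneg (T x))]
    have h0 : (0:ℝ) ≤ 1 - c ^ 2 := by nlinarith
    have hfin : ‖x - P (T x)‖ ≤ Real.sqrt (1 - c ^ 2) * ‖x‖ := by
      have hs := Real.sqrt_le_sqrt hsq
      rwa [Real.sqrt_sq (norm_nonneg _), Real.sqrt_mul h0,
        Real.sqrt_sq (norm_nonneg _)] at hs
    rw [happ]
    exact le_trans hfin (mul_le_mul_of_nonneg_left (hPnorm y) (Real.sqrt_nonneg _))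
  have hnorm1 : ‖P ∘L (1 - T)‖ < 1 := by
    have hle : ‖P ∘L (1 - T)‖ ≤ Real.sqrt (1 - c ^ 2) :=
      ContinuousLinearMap.opNorm_le_bound _ (Real.sqrt_nonneg _) hmain
    have h0 : (0:ℝ) ≤ 1 - c ^ 2 := by nlinarith
    have hlt : Real.sqrt (1 - c ^ 2) < 1 := by
      have h1 : (1:ℝ) - c ^ 2 < 1 := by nlinarith
      calc Real.sqrt (1 - c ^ 2) < Real.sqrt 1 := Real.sqrt_lt_sqrt h0 h1
        _ = 1 := Real.sqrt_one
    exact lt_of_le_of_lt hle hlt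
  -- second part
  have hQTp : ∀ z, Q (T z) = T z := by
    intro z
    have hmem : T z ∈ LinearMap.range (Q : H →ₗ[ℂ] H) := by rw [hQran]; exact ⟨z, rfl⟩
    obtain ⟨w, hw⟩ := hmem
    rw [← hw, ContinuousLinearMap.coe_coe, hQ2p]
  have hMP1 : ∀ z, Q (Qd (Q z)) = Q z := fun z => by
    simpa using DFunLike.congr_fun hQmp1 z
  have hPA : ∀ z, P z = P (Qd (Q z)) := by
    intro z
    have h1 : Q (z - Qd (Q z)) = 0 := by rw [map_sub, hMP1, sub_self]
    have h2 : z - Qd (Q z) ∈ LinearMap.ker (T : H →ₗ[ℂ] H) := by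
      rw [← hQker]; exact h1
    have h3 : P (z - Qd (Q z)) = 0 := hTkerP _ h2
    rw [map_sub, sub_eq_zero] at h3
    exact h3
  have hAP : ∀ z, Qd (Q z) = Qd (Q (P z)) := by
    intro z
    have h0 : P (z - P z) = 0 := by rw [map_sub, hPPp, sub_self]
    have h1 : z - P z ∈ LinearMap.ker (Q : H →ₗ[ℂ] H) := by
      rw [hQker]; exact hPT _ h0
    have h2 : Q (z - P z) = 0 := h1
    rw [map_sub, sub_eq_zero] at h2
    rw [h2]
  have hPQdQ : P = Qd ∘L Q := by
    have hcomp1 : P ∘L (Qd ∘L Q) = P := ContinuousLinearMap.ext fun z => (hPA z).symm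
    have hadj := congrArg ContinuousLinearMap.adjoint hcomp1
    rw [ContinuousLinearMap.adjoint_comp, hP.adjoint_eq, hQsa2.adjoint_eq] at hadj
    have h2 : (Qd ∘L Q) ∘L P = Qd ∘L Q := ContinuousLinearMap.ext fun z => (hAP z).symm
    rw [h2] at hadj
    exact hadj.symm
  have hfinal : Qd ∘L (Q - T) = P ∘L (1 - T) := by
    ext z
    have e1 : Qd (Q z) = P z := by rw [hPQdQ]; rfl
    have e2 : Qd (Q (T z)) = P (T z) := by rw [hPQdQ]; rfl
    have h4 : Qd (T z) = P (T z) := by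
      conv_lhs => rw [← hQTp z]
      exact e2
    calc (Qd ∘L (Q - T)) z = Qd (Q z) - Qd (T z) := by
          simp [ContinuousLinearMap.comp_apply, ContinuousLinearMap.sub_apply, map_sub]
      _ = P z - P (T z) := by rw [e1, h4]
      _ = (P ∘L (1 - T)) z := by
          simp [ContinuousLinearMap.comp_apply, ContinuousLinearMap.sub_apply,
            ContinuousLinearMap.one_apply, map_sub]
  refine ⟨hnorm1, ?_⟩
  rw [hfinal]
  rcases subsingleton_or_nontrivial H with hH | hH
  · haveI : Subsingleton (H →L[ℂ] H) :=
      ⟨fun a b => ContinuousLinearMap.ext fun x => Subsingleton.elim _ _⟩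
    have hspec : spectrum ℂ (P ∘L (1 - T)) = ∅ := by
      ext z
      simp [spectrum.mem_iff, isUnit_of_subsingleton]
    rw [spectralRadius, hspec]
    simp
  · calc spectralRadius ℂ (P ∘L (1 - T)) ≤ ‖P ∘L (1 - T)‖₊ :=
        spectrum.spectralRadius_le_nnnorm _
    _ < 1 := by exact_mod_cast hnorm1
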